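/- Let d, ℓ, m, q, r be positive integers with r ≥ 2, let F be a field, and suppose there exist a set C ⊆ F^m with |C| = q and a polynomial p : F^{m×(dℓ)} → F of degree at most r such that (C, p) captures the (d,ℓ,q)-uniformly rainbow property. Let G = (V,E) be a graph on n vertices and F a collection of ℓ-tuples of d-subsets of V. For each tuple T ∈ F, define the polynomial p_T in the m·n variables (x_v)_{v∈V} by substituting into p the variable vectors of the vertices of T. If F' ⊆ F is such that {p_T : T ∈ F'} spans the same linear subspace as {p_T : T ∈ F}, then the instances (G, F) and (G, F') of the (d,ℓ,q)-uniformly-rainbow-free coloring problem have the same solution set: a proper q-coloring of G has no uniformly rainbow tuple in F if and only if it has no uniformly rainbow tuple in F'. -/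
import Mathlib


/-- If `(C, p)` captures the `(d,l,q)`-uniformly rainbow property and the constraint
polynomials of `F'` span the same subspace as those of `F`, then the two instances of
the uniformly-rainbow-free coloring problem have the same solution set. -/
theorem stmt11 {K : Type*} [Field K] {V : Type*}
    (m d l q r : ℕ) (hd : 0 < d) (hl : 0 < l) (hq : 0 < q) (hm : 0 < m) (hr : 2 ≤ r)
    (c0 : Fin q → Fin m → K) (hc0 : Function.Injective c0)
    (P : MvPolynomial (Fin m × Fin l × Fin d) K)
    (hdeg : P.totalDegree ≤ r)
    (hcap : ∀ A : Fin l → Fin d → Fin q,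
      MvPolynomial.eval (fun t => c0 (A t.2.1 t.2.2) t.1) P ≠ 0 ↔
        (∀ j, Function.Injective (A j)) ∧
        ∀ j j', Finset.univ.image (A j) = Finset.univ.image (A j'))
    (G : SimpleGraph V) (Fcal Fcal' : Set (Fin l → Fin d → V))
    (hsub : Fcal' ⊆ Fcal)
    (hT : ∀ T ∈ Fcal, ∀ j, Function.Injective (T j))
    (hspan : Submodule.span K
        ((fun T : Fin l → Fin d → V => MvPolynomial.rename
          (fun t : Fin m × Fin l × Fin d => (T t.2.1 t.2.2, t.1)) P) '' Fcal') =
      Submodule.span K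
        ((fun T : Fin l → Fin d → V => MvPolynomial.rename
          (fun t : Fin m × Fin l × Fin d => (T t.2.1 t.2.2, t.1)) P) '' Fcal))
    (c : V → Fin q) (hc : ∀ u v, G.Adj u v → c u ≠ c v) :
    (∀ T ∈ Fcal, ¬ ((∀ j, Function.Injective (c ∘ T j)) ∧
        ∀ j j', Finset.univ.image (c ∘ T j) = Finset.univ.image (c ∘ T j'))) ↔
    (∀ T ∈ Fcal', ¬ ((∀ j, Function.Injective (c ∘ T j)) ∧
        ∀ j j', Finset.univ.image (c ∘ T j) = Finset.univ.image (c ∘ T j'))) := by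

  constructor
  · intro h T hT' ; exact h T (hsub hT')
  · intro h T hTF
    set x : V × Fin m → K := fun p => c0 (c p.1) p.2 with hx
    have key : ∀ S : Fin l → Fin d → V,
        MvPolynomial.eval x (MvPolynomial.rename
          (fun t : Fin m × Fin l × Fin d => (S t.2.1 t.2.2, t.1)) P)
        = MvPolynomial.eval (fun t : Fin m × Fin l × Fin d =>
            c0 ((c ∘ S t.2.1) t.2.2) t.1) P := by
      intro S
      rw [MvPolynomial.eval_rename]
      rfl
    set L : MvPolynomial (V × Fin m) K →ₗ[K] K :=
      (MvPolynomial.aeval x).toLinearMap with hL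
    have hLval : ∀ Q, L Q = MvPolynomial.eval x Q := fun Q => by
      show MvPolynomial.aeval x Q = _
      rw [← MvPolynomial.coe_aeval_eq_eval]
      rfl
    have hker : Submodule.span K
        ((fun T : Fin l → Fin d → V => MvPolynomial.rename
          (fun t : Fin m × Fin l × Fin d => (T t.2.1 t.2.2, t.1)) P) '' Fcal')
        ≤ LinearMap.ker L := by
      rw [Submodule.span_le]
      rintro _ ⟨S, hS, rfl⟩
      have hns := h S hS
      simp only [SetLike.mem_coe, LinearMap.mem_ker, hLval, key]
      by_contra hne
      exact hns ((hcap (fun j i => c (S j i))).mp hne)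
    rw [hspan] at hker
    have hmem : (MvPolynomial.rename
        (fun t : Fin m × Fin l × Fin d => (T t.2.1 t.2.2, t.1)) P)
        ∈ Submodule.span K
        ((fun T : Fin l → Fin d → V => MvPolynomial.rename
          (fun t : Fin m × Fin l × Fin d => (T t.2.1 t.2.2, t.1)) P) '' Fcal) :=
      Submodule.subset_span ⟨T, hTF, rfl⟩
    have hzero := hker hmem
    rw [LinearMap.mem_ker, hLval, key] at hzero
    intro hrain
    exact (not_not.mpr hzero) ((hcap (fun j i => c (T j i))).mpr hrain)
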